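/- Let V be a real vector space, and B₁, B₂ two maximal abelian subalgebras of gl(V) with dim V = dim B₁ = dim B₂. Then the semidirect sum Lie algebras B₁ ⋉ V and B₂ ⋉ V are isomorphic as Lie algebras if and only if there exists an invertible linear map φ ∈ GL(V) such that B₂ = φ B₁ φ^{-1}. -/

import Mathlib

/-- For two maximal abelian subalgebras `B₁, B₂` of `gl(V)` of dimension `n = dim V`, the
semidirect sums `B₁ ⋉ V` and `B₂ ⋉ V` are isomorphic as Lie algebras iff `B₁` and `B₂` are
conjugate by some `φ ∈ GL(V)`. -/
theorem stmt6 {V : Type*} [AddCommGroup V] [Module ℝ V] [FiniteDimensional ℝ V]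
    (B₁ B₂ : Submodule ℝ (Module.End ℝ V))
    (hd₁ : Module.finrank ℝ B₁ = Module.finrank ℝ V)
    (hd₂ : Module.finrank ℝ B₂ = Module.finrank ℝ V)
    (habel₁ : ∀ a ∈ B₁, ∀ b ∈ B₁, a * b = b * a)
    (hmax₁ : ∀ ψ : Module.End ℝ V, (∀ a ∈ B₁, ψ * a = a * ψ) → ψ ∈ B₁)
    (habel₂ : ∀ a ∈ B₂, ∀ b ∈ B₂, a * b = b * a)
    (hmax₂ : ∀ ψ : Module.End ℝ V, (∀ a ∈ B₂, ψ * a = a * ψ) → ψ ∈ B₂) :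
    (∃ e : (B₁ × V) ≃ₗ[ℝ] (B₂ × V),
      ∀ u v : B₁ × V,
        e ((0 : B₁), (u.1 : Module.End ℝ V) v.2 - (v.1 : Module.End ℝ V) u.2) =
          ((0 : B₂), ((e u).1 : Module.End ℝ V) (e v).2 - ((e v).1 : Module.End ℝ V) (e u).2)) ↔
    (∃ g : V ≃ₗ[ℝ] V, B₂ = B₁.map (g.conj : Module.End ℝ V →ₗ[ℝ] Module.End ℝ V)) := by
  have h1 : (1 : Module.End ℝ V) ∈ B₁ := hmax₁ 1 (fun a _ => by rw [one_mul, mul_one])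
  have h2 : (1 : Module.End ℝ V) ∈ B₂ := hmax₂ 1 (fun a _ => by rw [one_mul, mul_one])
  constructor
  · rintro ⟨e, he⟩
    -- first component of e (0, x) vanishes
    have hfst : ∀ x : V, (e (0, x)).1 = 0 := by
      intro x
      have h := he (⟨1, h1⟩, 0) (0, x)
      simp only [Module.End.one_apply, ZeroMemClass.coe_zero, LinearMap.zero_apply,
        sub_zero] at h
      rw [h]
    let gl : V →ₗ[ℝ] V :=
      (LinearMap.snd ℝ B₂ V).comp (e.toLinearMap.comp (LinearMap.inr ℝ B₁ V))
    have gl_apply : ∀ x : V, gl x = (e (0, x)).2 := fun x => rfl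
    have hginj : Function.Injective gl := by
      intro x y hxy
      have hxy' : e (0, x) = e (0, y) := by
        rw [Prod.ext_iff]
        exact ⟨by rw [hfst, hfst], hxy⟩
      simpa using e.injective hxy'
    have hgsurj : Function.Surjective gl := by
      intro y
      obtain ⟨u, hu⟩ := e.surjective (⟨1, h2⟩, 0)
      obtain ⟨v, hv⟩ := e.surjective (0, y)
      refine ⟨(u.1 : Module.End ℝ V) v.2 - (v.1 : Module.End ℝ V) u.2, ?_⟩
      have h := he u v
      rw [hu, hv] at h
      rw [gl_apply, h]
      simp
    let g : V ≃ₗ[ℝ] V := LinearEquiv.ofBijective gl ⟨hginj, hgsurj⟩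
    have g_apply : ∀ x : V, g x = (e (0, x)).2 := fun x => rfl
    -- commutation: g (a x) = (e (a,0)).1 (g x)
    have hcomm : ∀ (a : B₁) (x : V),
        g ((a : Module.End ℝ V) x) = ((e (a, 0)).1 : Module.End ℝ V) (g x) := by
      intro a x
      have h := he (a, 0) (0, x)
      simp only [ZeroMemClass.coe_zero, LinearMap.zero_apply, sub_zero, hfst] at h
      have := congrArg Prod.snd h
      simpa [g_apply] using this
    have hconj : ∀ a : B₁,
        (g.conj : Module.End ℝ V →ₗ[ℝ] Module.End ℝ V) (a : Module.End ℝ V)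
          = ((e (a, 0)).1 : Module.End ℝ V) := by
      intro a
      ext y
      simp only [LinearEquiv.coe_coe, LinearEquiv.conj_apply_apply]
      have := hcomm a (g.symm y)
      rwa [g.apply_symm_apply] at this
    -- first component of e (a, x) equals first component of e (a, 0)
    have hfst' : ∀ u : B₁ × V, (e u).1 = (e (u.1, 0)).1 := by
      intro u
      have : u = (u.1, 0) + (0, u.2) := by simp
      rw [this, map_add]
      simp [hfst]
    refine ⟨g, le_antisymm ?_ ?_⟩
    · intro b hb
      obtain ⟨u, hu⟩ := e.surjective (⟨b, hb⟩, 0)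
      refine ⟨u.1, u.1.2, ?_⟩
      rw [hconj u.1, ← hfst' u, hu]
    · rintro b ⟨a, ha, rfl⟩
      rw [hconj ⟨a, ha⟩]
      exact (e (⟨a, ha⟩, 0)).1.2
  · rintro ⟨g, hB⟩
    let e₁ : B₁ ≃ₗ[ℝ] B₂ :=
      (g.conj.submoduleMap B₁).trans (LinearEquiv.ofEq _ _ hB.symm)
    have he₁ : ∀ a : B₁, ((e₁ a : B₂) : Module.End ℝ V)
        = g.conj (a : Module.End ℝ V) := by
      intro a
      rfl
    refine ⟨e₁.prodCongr g, ?_⟩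
    intro u v
    have : (e₁.prodCongr g) ((0 : B₁), (u.1 : Module.End ℝ V) v.2 - (v.1 : Module.End ℝ V) u.2)
        = ((0 : B₂), g ((u.1 : Module.End ℝ V) v.2 - (v.1 : Module.End ℝ V) u.2)) := by
      rw [LinearEquiv.prodCongr_apply, map_zero]
    rw [this]
    simp only [LinearEquiv.prodCongr_apply]
    congr 1
    rw [map_sub, he₁ u.1, he₁ v.1]
    simp only [LinearEquiv.conj_apply_apply, LinearEquiv.symm_apply_apply]
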